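/- Main cut-counting estimate for complete graphs: there exists a constant K > 0 such that for every integer n ≥ 2, ∑_{k=1}^{n−1} binomial(n−2, k−1) · k^{k−2} · (n−k)^{n−k−2} ≤ K · n^{n−3}, where the powers are taken in the reals (with integer exponents, so that k^{k−2} = 1/k when k = 1 and similarly for (n−k)^{n−k−2}). -/

import Mathlib

open Real Finset Nat

-- factorial bounds
lemma fact_lower (m : ℕ) (hm : 1 ≤ m) : √(2*m) * ((m:ℝ)/exp 1)^m ≤ (m ! : ℝ) := by
  have h1 : √π ≤ Stirling.stirlingSeq m := by
    obtain ⟨j, rfl⟩ := Nat.exists_eq_add_of_le hm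
    have := Stirling.stirlingSeq'_antitone
    have ht : Filter.Tendsto (Stirling.stirlingSeq ∘ Nat.succ) Filter.atTop (nhds (√π)) :=
      Stirling.tendsto_stirlingSeq_sqrt_pi.comp (Filter.tendsto_add_atTop_nat 1)
    have := this.le_of_tendsto ht j
    simpa [Nat.add_comm] using this
  have h2 : (1:ℝ) ≤ Stirling.stirlingSeq m := le_trans (by
    rw [show (1:ℝ) = √1 by simp]
    exact Real.sqrt_le_sqrt (by linarith [Real.pi_gt_three])) h1
  have hpos : 0 < √(2*m) * ((m:ℝ)/exp 1)^m := by
    have : (0:ℝ) < m := by exact_mod_cast hm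
    positivity
  have := (le_div_iff₀ hpos).mp h2
  simpa [Stirling.stirlingSeq] using this

lemma fact_upper (m : ℕ) (hm : 1 ≤ m) : (m ! : ℝ) ≤ exp 1 * √m * ((m:ℝ)/exp 1)^m := by
  have h1 : Stirling.stirlingSeq m ≤ exp 1 / √2 := by
    rw [← Stirling.stirlingSeq_one]
    obtain ⟨j, rfl⟩ := Nat.exists_eq_add_of_le hm
    have := Stirling.stirlingSeq'_antitone (Nat.zero_le j)
    simpa [Nat.add_comm] using this
  have hpos : 0 < √(2*m) * ((m:ℝ)/exp 1)^m := by
    have : (0:ℝ) < m := by exact_mod_cast hm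
    positivity
  have h2 := (div_le_iff₀ hpos).mp (le_trans (le_of_eq rfl) h1)
  have := (div_le_iff₀ hpos).mp h1
  calc (m ! : ℝ) = Stirling.stirlingSeq m * (√(2*m) * ((m:ℝ)/exp 1)^m) := by
        rw [Stirling.stirlingSeq]; field_simp
    _ ≤ (exp 1 / √2) * (√(2*m) * ((m:ℝ)/exp 1)^m) := by
        apply mul_le_mul_of_nonneg_right h1 hpos.le
    _ = exp 1 * √m * ((m:ℝ)/exp 1)^m := by
        rw [show (2*(m:ℝ)) = 2 * m by ring, Real.sqrt_mul (by norm_num)]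
        have : √2 ≠ 0 := by positivity
        field_simp

lemma pow_succ_le (a : ℕ) (ha : 1 ≤ a) : ((a:ℝ)+1)^a ≤ exp 1 * (a:ℝ)^a := by
  have hap : (0:ℝ) < a := by exact_mod_cast ha
  have h1 : (a:ℝ)+1 ≤ exp (1/a) * a := by
    have := Real.add_one_le_exp (1/(a:ℝ))
    calc (a:ℝ)+1 = (1/a + 1) * a := by field_simp; ring
      _ ≤ exp (1/a) * a := by nlinarith [Real.add_one_le_exp (1/(a:ℝ))]
  calc ((a:ℝ)+1)^a ≤ (exp (1/a) * a)^a := by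
        apply pow_le_pow_left₀ (by positivity) h1
    _ = exp (1/a)^a * (a:ℝ)^a := mul_pow _ _ _
    _ = exp 1 * (a:ℝ)^a := by
        rw [← Real.exp_nat_mul]
        congr 1
        field_simp

lemma choose_bound (a b : ℕ) (ha : 1 ≤ a) (hb : 1 ≤ b) :
    ((a+b).choose a : ℝ) ≤ exp 1 * √((a:ℝ)+b) * ((a:ℝ)+b)^(a+b) / (2 * √a * √b * (a:ℝ)^a * (b:ℝ)^b) := by
  have hap : (0:ℝ) < a := by exact_mod_cast ha
  have hbp : (0:ℝ) < b := by exact_mod_cast hb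
  have hfact : ((a+b).choose a : ℝ) * (a ! : ℝ) * (b ! : ℝ) = ((a+b)! : ℝ) := by
    have := Nat.choose_mul_factorial_mul_factorial (Nat.le_add_right a b)
    rw [Nat.add_sub_cancel_left] at this
    exact_mod_cast congrArg (Nat.cast : ℕ → ℝ) this
  have hfa := fact_lower a ha
  have hfb := fact_lower b hb
  have hfab := fact_upper (a+b) (le_trans ha (Nat.le_add_right a b))
  have hfap : (0:ℝ) < (a ! : ℝ) := by exact_mod_cast a.factorial_pos
  have hfbp : (0:ℝ) < (b ! : ℝ) := by exact_mod_cast b.factorial_pos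
  have hda : (0:ℝ) < √(2*a) * ((a:ℝ)/exp 1)^a := by positivity
  have hdb : (0:ℝ) < √(2*b) * ((b:ℝ)/exp 1)^b := by positivity
  have step1 : ((a+b).choose a : ℝ) ≤ ((a+b)! : ℝ) / ((√(2*a) * ((a:ℝ)/exp 1)^a) * (√(2*b) * ((b:ℝ)/exp 1)^b)) := by
    rw [le_div_iff₀ (by positivity)]
    calc ((a+b).choose a : ℝ) * (√(2*a) * ((a:ℝ)/exp 1)^a * (√(2*b) * ((b:ℝ)/exp 1)^b))
        ≤ ((a+b).choose a : ℝ) * ((a ! : ℝ) * (b ! : ℝ)) := by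
          apply mul_le_mul_of_nonneg_left _ (by positivity)
          exact mul_le_mul hfa hfb (by positivity) hfap.le
      _ = ((a+b)! : ℝ) := by rw [← hfact]; ring
  calc ((a+b).choose a : ℝ) ≤ ((a+b)! : ℝ) / ((√(2*a) * ((a:ℝ)/exp 1)^a) * (√(2*b) * ((b:ℝ)/exp 1)^b)) := step1
    _ ≤ (exp 1 * √((a:ℝ)+b) * (((a:ℝ)+b)/exp 1)^(a+b)) / ((√(2*a) * ((a:ℝ)/exp 1)^a) * (√(2*b) * ((b:ℝ)/exp 1)^b)) := by
        have h4 : ((a+b:ℕ):ℝ) = (a:ℝ)+b := by push_cast; ring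
        rw [h4] at hfab
        exact div_le_div_of_nonneg_right hfab (by positivity) |>.trans_eq rfl |>.trans (le_of_eq rfl)
    _ = exp 1 * √((a:ℝ)+b) * ((a:ℝ)+b)^(a+b) / (2 * √a * √b * (a:ℝ)^a * (b:ℝ)^b) := by
        rw [div_pow, div_pow, div_pow, Real.sqrt_mul (by norm_num) (a:ℝ), Real.sqrt_mul (by norm_num) (b:ℝ)]
        have h2 : √2 * √2 = 2 := Real.mul_self_sqrt (by norm_num)
        have hea : (0:ℝ) < exp 1 := Real.exp_pos 1
        field_simp
        rw [pow_add, Real.sq_sqrt (by norm_num)]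

lemma sqrt_key (a b : ℕ) : √((a:ℝ)+b) * ((a:ℝ)+b+2) ≤ 4*(√a*((a:ℝ)+1) + √b*((b:ℝ)+1)) := by
  have h2 : √2 ≤ 2 := by
    nlinarith [Real.sqrt_nonneg 2, Real.sq_sqrt (show (0:ℝ) ≤ 2 by norm_num)]
  have h4 : 2*√2 ≤ 4 := by linarith
  rcases le_total (a:ℝ) (b:ℝ) with h | h
  · have h1 : √((a:ℝ)+b) ≤ √2 * √b := by
      rw [← Real.sqrt_mul (by norm_num)]
      exact Real.sqrt_le_sqrt (by linarith)
    have h3 : ((a:ℝ)+b+2) ≤ 2*((b:ℝ)+1) := by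
      have : (0:ℝ) ≤ a := Nat.cast_nonneg a
      linarith
    have hnn : (0:ℝ) ≤ √((a:ℝ)+b) := Real.sqrt_nonneg _
    have hnb : (0:ℝ) ≤ √(b:ℝ) := Real.sqrt_nonneg _
    have hna : (0:ℝ) ≤ √(a:ℝ) := Real.sqrt_nonneg _
    have hb1 : (0:ℝ) ≤ (b:ℝ)+1 := by positivity
    have ha1 : (0:ℝ) ≤ (a:ℝ)+1 := by positivity
    calc √((a:ℝ)+b) * ((a:ℝ)+b+2) ≤ (√2*√b) * (2*((b:ℝ)+1)) := by
          apply mul_le_mul h1 h3 (by positivity) (by positivity)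
      _ = (2*√2) * (√b*((b:ℝ)+1)) := by ring
      _ ≤ 4 * (√b*((b:ℝ)+1)) := by
          apply mul_le_mul_of_nonneg_right h4 (by positivity)
      _ ≤ 4*(√a*((a:ℝ)+1) + √b*((b:ℝ)+1)) := by nlinarith [mul_nonneg hna ha1]
  · have h1 : √((a:ℝ)+b) ≤ √2 * √a := by
      rw [← Real.sqrt_mul (by norm_num)]
      exact Real.sqrt_le_sqrt (by linarith)
    have h3 : ((a:ℝ)+b+2) ≤ 2*((a:ℝ)+1) := by
      have : (0:ℝ) ≤ b := Nat.cast_nonneg b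
      linarith
    have hnn : (0:ℝ) ≤ √((a:ℝ)+b) := Real.sqrt_nonneg _
    have hnb : (0:ℝ) ≤ √(b:ℝ) := Real.sqrt_nonneg _
    have hna : (0:ℝ) ≤ √(a:ℝ) := Real.sqrt_nonneg _
    have hb1 : (0:ℝ) ≤ (b:ℝ)+1 := by positivity
    have ha1 : (0:ℝ) ≤ (a:ℝ)+1 := by positivity
    calc √((a:ℝ)+b) * ((a:ℝ)+b+2) ≤ (√2*√a) * (2*((a:ℝ)+1)) := by
          apply mul_le_mul h1 h3 (by positivity) (by positivity)
      _ = (2*√2) * (√a*((a:ℝ)+1)) := by ring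
      _ ≤ 4 * (√a*((a:ℝ)+1)) := by
          apply mul_le_mul_of_nonneg_right h4 (by positivity)
      _ ≤ 4*(√a*((a:ℝ)+1) + √b*((b:ℝ)+1)) := by nlinarith [mul_nonneg hnb hb1]

lemma mid (a b : ℕ) (ha : 1 ≤ a) (hb : 1 ≤ b) :
    ((a+b).choose a : ℝ) * ((a:ℝ)+1)^(a-1) * ((b:ℝ)+1)^(b-1) ≤
      2 * exp 1 ^ 3 * ((a:ℝ)+b+2)^(a+b-1) * (1/(((a:ℝ)+1)*√a) + 1/(((b:ℝ)+1)*√b)) := by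
  have hap : (0:ℝ) < a := by exact_mod_cast ha
  have hbp : (0:ℝ) < b := by exact_mod_cast hb
  have hsa : 0 < √(a:ℝ) := Real.sqrt_pos.mpr hap
  have hsb : 0 < √(b:ℝ) := Real.sqrt_pos.mpr hbp
  have hsab : 0 < √((a:ℝ)+b) := Real.sqrt_pos.mpr (by positivity)
  have hea : (0:ℝ) < exp 1 := Real.exp_pos 1
  have hA : ((a:ℝ)+1)^(a-1) ≤ exp 1 * (a:ℝ)^a / ((a:ℝ)+1) := by
    rw [le_div_iff₀ (by positivity)]
    calc ((a:ℝ)+1)^(a-1) * ((a:ℝ)+1) = ((a:ℝ)+1)^a := by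
          rw [← pow_succ]; congr 1; omega
      _ ≤ exp 1 * (a:ℝ)^a := pow_succ_le a ha
  have hB : ((b:ℝ)+1)^(b-1) ≤ exp 1 * (b:ℝ)^b / ((b:ℝ)+1) := by
    rw [le_div_iff₀ (by positivity)]
    calc ((b:ℝ)+1)^(b-1) * ((b:ℝ)+1) = ((b:ℝ)+1)^b := by
          rw [← pow_succ]; congr 1; omega
      _ ≤ exp 1 * (b:ℝ)^b := pow_succ_le b hb
  have hPow : ((a:ℝ)+b)^(a+b) ≤ ((a:ℝ)+b+2)^(a+b-1)*((a:ℝ)+b+2) := by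
    calc ((a:ℝ)+b)^(a+b) ≤ ((a:ℝ)+b+2)^(a+b) := by
          apply pow_le_pow_left₀ (by positivity) (by linarith)
      _ = ((a:ℝ)+b+2)^(a+b-1)*((a:ℝ)+b+2) := by rw [← pow_succ]; congr 1; omega
  calc ((a+b).choose a : ℝ) * ((a:ℝ)+1)^(a-1) * ((b:ℝ)+1)^(b-1)
      ≤ (exp 1 * √((a:ℝ)+b) * ((a:ℝ)+b)^(a+b) / (2*√a*√b*(a:ℝ)^a*(b:ℝ)^b))
          * (exp 1 * (a:ℝ)^a/((a:ℝ)+1)) * (exp 1 * (b:ℝ)^b/((b:ℝ)+1)) := by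
        apply mul_le_mul _ hB (by positivity) (by positivity)
        apply mul_le_mul (choose_bound a b ha hb) hA (by positivity) (by positivity)
      _ = exp 1^3 * ((√((a:ℝ)+b) * ((a:ℝ)+b)^(a+b))) / (2*√a*√b*((a:ℝ)+1)*((b:ℝ)+1)) := by
        have h3 : rexp 1 ^ 3 = rexp 3 := by
          rw [show (3:ℝ) = ((3:ℕ):ℝ)*1 by norm_num, Real.exp_nat_mul]
        field_simp
      _ ≤ exp 1^3 * ((√((a:ℝ)+b) * (((a:ℝ)+b+2)^(a+b-1)*((a:ℝ)+b+2)))) / (2*√a*√b*((a:ℝ)+1)*((b:ℝ)+1)) := by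
        gcongr
      _ = exp 1^3 * ((√((a:ℝ)+b) * ((a:ℝ)+b+2)) * ((a:ℝ)+b+2)^(a+b-1)) / (2*√a*√b*((a:ℝ)+1)*((b:ℝ)+1)) := by
        ring
      _ ≤ exp 1^3 * ((4*(√a*((a:ℝ)+1) + √b*((b:ℝ)+1))) * ((a:ℝ)+b+2)^(a+b-1)) / (2*√a*√b*((a:ℝ)+1)*((b:ℝ)+1)) := by
        gcongr _ * (?_ * _) / _
        exact sqrt_key a b
      _ = 2 * exp 1 ^ 3 * ((a:ℝ)+b+2)^(a+b-1) * (1/(((a:ℝ)+1)*√a) + 1/(((b:ℝ)+1)*√b)) := by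
        field_simp
        ring

lemma tele_step (N : ℕ) (hN : 1 ≤ N) :
    1/(((N:ℝ)+1) * √N) ≤ 2/√N - 2/√((N:ℝ)+1) := by
  set x := √(N:ℝ) with hxdef
  set y := √((N:ℝ)+1) with hydef
  have hNp : (0:ℝ) < N := by exact_mod_cast hN
  have hx : 0 < x := Real.sqrt_pos.mpr hNp
  have hy : 0 < y := Real.sqrt_pos.mpr (by positivity)
  have hx2 : x^2 = N := Real.sq_sqrt hNp.le
  have hy2 : y^2 = (N:ℝ)+1 := Real.sq_sqrt (by positivity)
  have hxy : x ≤ y := Real.sqrt_le_sqrt (by linarith)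
  have hnum : 1 ≤ 2*y*(y-x) := by
    nlinarith [mul_nonneg (sub_nonneg.2 hxy) (sub_nonneg.2 hxy)]
  have e1 : 2/x - 2/y = (2*y - 2*x)/(x*y) := by
    field_simp
  rw [e1, ← hy2]
  rw [div_le_div_iff₀ (by positivity) (by positivity)]
  nlinarith [mul_le_mul_of_nonneg_left hnum (mul_pos hx hy).le]

lemma tele_aux (N : ℕ) (hN : 1 ≤ N) :
    ∑ k ∈ Finset.Icc 2 N, 1/((k:ℝ) * √((k:ℝ)-1)) ≤ 2 - 2/√N := by
  induction N with
  | zero => omega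
  | succ M ih =>
    rcases Nat.lt_or_ge M 1 with hM | hM
    · interval_cases M
      simp
    · have hsum := Finset.sum_Icc_succ_top (show 2 ≤ M+1 by omega)
        (fun k : ℕ => 1/((k:ℝ) * √((k:ℝ)-1)))
      rw [hsum]
      have hterm : 1/(((M+1:ℕ):ℝ) * √(((M+1:ℕ):ℝ)-1)) = 1/(((M:ℝ)+1) * √M) := by
        push_cast
        norm_num
      rw [hterm]
      have := tele_step M hM
      have hih := ih hM
      have hcast : √((M:ℝ)+1) = √((M+1:ℕ):ℝ) := by push_cast; ring_nf
      rw [← hcast]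
      linarith

lemma tele (N : ℕ) : ∑ k ∈ Finset.Icc 2 N, 1/((k:ℝ) * √((k:ℝ)-1)) ≤ 2 := by
  rcases Nat.lt_or_ge N 1 with hN | hN
  · interval_cases N
    simp
  · have := tele_aux N hN
    have h2 : 0 ≤ 2/√(N:ℝ) := by positivity
    linarith

lemma midterm (n k : ℕ) (h2 : 2 ≤ k) (hk : k ≤ n - 2) (hn : 4 ≤ n) :
    ((n-2).choose (k-1) : ℝ) * (k:ℝ)^((k:ℤ)-2) * ((n-k:ℕ):ℝ)^((n:ℤ)-(k:ℤ)-2) ≤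
      2*exp 1^3 * (n:ℝ)^(n-3) *
        (1/((k:ℝ)*√((k:ℝ)-1)) + 1/(((n-k:ℕ):ℝ)*√(((n-k:ℕ):ℝ)-1))) := by
  obtain ⟨a, b, ha, hb, rfl, rfl⟩ :
      ∃ a b, 1 ≤ a ∧ 1 ≤ b ∧ k = a+1 ∧ n = a+b+2 :=
    ⟨k-1, n-k-1, by omega, by omega, by omega, by omega⟩
  have e1 : a+b+2-2 = a+b := by omega
  have e2 : a+1-1 = a := by omega
  have e3 : a+b+2-(a+1) = b+1 := by omega
  have e4 : a+b+2-3 = a+b-1 := by omega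
  rw [e1, e2, e3, e4]
  have z1 : ((a+1:ℕ):ℤ) - 2 = ((a-1:ℕ):ℤ) := by omega
  have z2 : ((a+b+2:ℕ):ℤ) - ((a+1:ℕ):ℤ) - 2 = ((b-1:ℕ):ℤ) := by omega
  rw [z1, z2, zpow_natCast, zpow_natCast]
  have := mid a b ha hb
  push_cast
  push_cast at this
  convert this using 3 <;> push_cast <;> ring_nf

lemma reflect_sum (n : ℕ) (hn : 4 ≤ n) :
    ∑ k ∈ Finset.Icc 2 (n-2), 1/(((n-k:ℕ):ℝ)*√(((n-k:ℕ):ℝ)-1)) =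
      ∑ j ∈ Finset.Icc 2 (n-2), 1/((j:ℝ)*√((j:ℝ)-1)) := by
  apply Finset.sum_nbij' (i := fun k => n - k) (j := fun k => n - k) <;>
    simp only [Finset.mem_Icc] <;> intros <;> first | omega | rfl | trivial
/-- Main cut-counting estimate for complete graphs: there is a constant `K > 0` such that
for every `n ≥ 2`,
`∑_{k=1}^{n−1} C(n−2, k−1) · k^(k−2) · (n−k)^(n−k−2) ≤ K · n^(n−3)`,
where the powers are real powers with integer exponents. -/
theorem stmt15 :
    ∃ K : ℝ, 0 < K ∧ ∀ n : ℕ, 2 ≤ n →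
      ∑ k ∈ Finset.Icc 1 (n - 1),
          ((n - 2).choose (k - 1) : ℝ) * (k : ℝ) ^ ((k : ℤ) - 2) *
            (((n - k : ℕ) : ℝ)) ^ ((n : ℤ) - (k : ℤ) - 2) ≤
        K * (n : ℝ) ^ ((n : ℤ) - 3) := by
  refine ⟨200, by norm_num, ?_⟩
  intro n hn
  rcases Nat.lt_or_ge n 4 with h4 | h4
  · interval_cases n
    · norm_num
    · rw [show Finset.Icc 1 (3-1) = {1, 2} from rfl]
      rw [Finset.sum_insert (by decide), Finset.sum_singleton]
      norm_num
  · have hsplit : Finset.Icc 1 (n-1) = insert 1 (insert (n-1) (Finset.Icc 2 (n-2))) := by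
      ext x
      simp only [Finset.mem_Icc, Finset.mem_insert]
      omega
    rw [hsplit, Finset.sum_insert (by simp [Finset.mem_Icc]; omega),
      Finset.sum_insert (by simp [Finset.mem_Icc]; omega)]
    have hz : (n:ℤ)-3 = ((n-3:ℕ):ℤ) := by omega
    rw [hz, zpow_natCast]
    have hNpow : (0:ℝ) ≤ (n:ℝ)^(n-3) := by positivity
    have hmono : ((n-1:ℕ):ℝ)^(n-3) ≤ (n:ℝ)^(n-3) :=
      pow_le_pow_left₀ (by positivity) (by exact_mod_cast Nat.sub_le n 1) _
    -- term k = 1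
    have hT1 : ((n-2).choose (1-1) : ℝ) * ((1:ℕ):ℝ)^(((1:ℕ):ℤ)-2) * ((n-1:ℕ):ℝ)^((n:ℤ)-((1:ℕ):ℤ)-2)
        ≤ (n:ℝ)^(n-3) := by
      have hz1 : (n:ℤ)-((1:ℕ):ℤ)-2 = ((n-3:ℕ):ℤ) := by omega
      rw [hz1, zpow_natCast]
      simp only [show (1:ℕ)-1 = 0 from rfl, Nat.choose_zero_right, Nat.cast_one, one_zpow]
      simpa using hmono
    -- term k = n-1
    have hT2 : ((n-2).choose (n-1-1) : ℝ) * ((n-1:ℕ):ℝ)^(((n-1:ℕ):ℤ)-2) * ((n-(n-1):ℕ):ℝ)^((n:ℤ)-((n-1:ℕ):ℤ)-2)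
        ≤ (n:ℝ)^(n-3) := by
      have e1 : n-1-1 = n-2 := by omega
      have e2 : n-(n-1) = 1 := by omega
      have hz1 : ((n-1:ℕ):ℤ)-2 = ((n-3:ℕ):ℤ) := by omega
      rw [e1, e2, hz1, zpow_natCast, Nat.choose_self]
      simp only [Nat.cast_one, one_zpow, mul_one, one_mul]
      exact hmono
    -- middle part
    have hmid : ∑ k ∈ Finset.Icc 2 (n-2),
        ((n-2).choose (k-1) : ℝ) * (k:ℝ)^((k:ℤ)-2) * ((n-k:ℕ):ℝ)^((n:ℤ)-(k:ℤ)-2)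
        ≤ 8 * exp 1^3 * (n:ℝ)^(n-3) := by
      calc ∑ k ∈ Finset.Icc 2 (n-2),
            ((n-2).choose (k-1) : ℝ) * (k:ℝ)^((k:ℤ)-2) * ((n-k:ℕ):ℝ)^((n:ℤ)-(k:ℤ)-2)
          ≤ ∑ k ∈ Finset.Icc 2 (n-2), 2*exp 1^3 * (n:ℝ)^(n-3) *
              (1/((k:ℝ)*√((k:ℝ)-1)) + 1/(((n-k:ℕ):ℝ)*√(((n-k:ℕ):ℝ)-1))) := by
            apply Finset.sum_le_sum
            intro k hk
            simp only [Finset.mem_Icc] at hk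
            exact midterm n k hk.1 hk.2 h4
        _ = 2*exp 1^3 * (n:ℝ)^(n-3) *
              ((∑ k ∈ Finset.Icc 2 (n-2), 1/((k:ℝ)*√((k:ℝ)-1))) +
               (∑ k ∈ Finset.Icc 2 (n-2), 1/(((n-k:ℕ):ℝ)*√(((n-k:ℕ):ℝ)-1)))) := by
            rw [← Finset.sum_add_distrib, ← Finset.mul_sum]
        _ ≤ 2*exp 1^3 * (n:ℝ)^(n-3) * (2 + 2) := by
            have hc : (0:ℝ) ≤ 2*exp 1^3 * (n:ℝ)^(n-3) := by positivity
            apply mul_le_mul_of_nonneg_left _ hc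
            have h1 := tele (n-2)
            have h2 := (reflect_sum n h4).le.trans (tele (n-2))
            linarith
        _ = 8 * exp 1^3 * (n:ℝ)^(n-3) := by ring
    have hexp : exp 1^3 ≤ 20.1 := by
      have h := Real.exp_one_lt_d9
      have h3 := pow_lt_pow_left₀ h (Real.exp_pos 1).le (show 3 ≠ 0 by norm_num)
      nlinarith [h3]
    have hexp0 : (0:ℝ) < exp 1 := Real.exp_pos 1
    nlinarith [hT1, hT2, hmid, hNpow, hexp, pow_pos hexp0 3]
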